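/- In the renewal setting with constant investor probability p_y = p ∈ [0,1) for all y < 0, and with ψ_cl(0) = μλ/c where 0 < μλ/c < 1, one has p₀ = p·μλ/c and ψ(u) = ψ_cl(u)·(1 - p·(1 - μλ/c)/(1 - p·μλ/c)) for all u ≥ 0, where ψ satisfies the renewal relation with normalized measures ν_u (probability measures on (-∞,0)). -/

import Mathlib

open Real Filter Topology MeasureTheory Set

theorem constant_investor_probability
    (lam mu c p : ℝ) (hlam : 0 < lam) (hmu : 0 < mu) (hc : 0 < c)
    (hnet : lam * mu < c) (hp : p ∈ Ico (0 : ℝ) 1)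
    (ψ ψcl : ℝ → ℝ) (hψ01 : ∀ u, ψ u ∈ Icc (0 : ℝ) 1)
    (hψcl01 : ∀ u, ψcl u ∈ Icc (0 : ℝ) 1)
    (hψcl0 : ψcl 0 = mu * lam / c)
    (ν : ℝ → Measure ℝ) (hνprob : ∀ u, IsProbabilityMeasure (ν u))
    (hνsupp : ∀ u, ν u (Ici 0) = 0)
    (hmodel : ∀ u ≥ 0, ψ u = ψcl u * ∫ y, ψ y ∂(ν u))
    (hrenew : ∀ y < (0 : ℝ), 1 - ψ y = p * (1 - ψ 0)) :
    p * ψcl 0 = p * mu * lam / c ∧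
    ∀ u ≥ (0 : ℝ),
      ψ u = ψcl u * (1 - p * (1 - mu * lam / c) / (1 - p * (mu * lam / c))) := by
  obtain ⟨hp0, hp1⟩ := hp
  set q : ℝ := mu * lam / c with hq
  have hq0 : 0 < q := by positivity
  have hq1 : q < 1 := by
    rw [hq, div_lt_one hc]; nlinarith
  have hden : 0 < 1 - p * q := by nlinarith
  -- a.e. every point is negative
  have hae : ∀ u, ∀ᵐ y ∂(ν u), y < 0 := by
    intro u
    rw [ae_iff]
    have : {y : ℝ | ¬ y < 0} = Ici 0 := by ext y; simp [not_lt]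
    rw [this]; exact hνsupp u
  have hint : ∀ u, ∫ y, ψ y ∂(ν u) = 1 - p * (1 - ψ 0) := by
    intro u
    have := hνprob u
    have h1 : ∫ y, ψ y ∂(ν u) = ∫ _y, (1 - p * (1 - ψ 0)) ∂(ν u) := by
      refine integral_congr_ae ?_
      filter_upwards [hae u] with y hy
      have := hrenew y hy
      linarith
    rw [h1]
    simp
  have heq0 : ψ 0 = q * (1 - p * (1 - ψ 0)) := by
    have := hmodel 0 le_rfl
    rw [hint 0, hψcl0] at this
    exact this
  have hψ0 : ψ 0 = q * (1 - p) / (1 - p * q) := by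
    rw [eq_div_iff (ne_of_gt hden)]
    nlinarith [heq0]
  refine ⟨by rw [hψcl0]; ring, ?_⟩
  intro u hu
  rw [hmodel u hu, hint u, hψ0]
  have : 1 - p * (1 - q * (1 - p) / (1 - p * q)) = 1 - p * (1 - q) / (1 - p * q) := by
    field_simp
    ring
  rw [this]
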